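/- Let X be a real reflexive Banach space and let C and D be disjoint nonempty closed convex subsets of X such that rec(C) ∩ rec(D) = {0} and at least one of the interiors Int barc(C), Int barc(D) (taken in the norm topology of X*) is nonempty. Then C and D are strongly separated, i.e. there exists x* ∈ X* \ {0} with sup{⟨x*, c⟩ : c ∈ C} < inf{⟨x*, d⟩ : d ∈ D}; equivalently, dist(C, D) = inf{‖c − d‖ : c ∈ C, d ∈ D} > 0. -/

import Mathlib

set_option synthInstance.maxHeartbeats 1000000
set_option maxHeartbeats 1000000

open Filter Topology Set Metric Pointwise

/-- The barrier cone of a set `C` in a normed space. -/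
def barrierCone {X : Type*} [NormedAddCommGroup X] [NormedSpace ℝ X] (C : Set X) :
    Set (X →L[ℝ] ℝ) :=
  {f | ∃ b : ℝ, ∀ c ∈ C, f c ≤ b}

/-- The recession cone of a set `C`: vectors `v` with `c + v ∈ C` for all `c ∈ C`. -/
def recessionCone {X : Type*} [NormedAddCommGroup X] [NormedSpace ℝ X] (C : Set X) :
    Set X :=
  {v | ∀ c ∈ C, c + v ∈ C}

/-- `C` and `D` are strongly separated: there is a nonzero continuous linear functional whose
supremum over `C` is strictly smaller than its infimum over `D`. -/
def StronglySeparated {X : Type*} [NormedAddCommGroup X] [NormedSpace ℝ X]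
    (C D : Set X) : Prop :=
  ∃ f : X →L[ℝ] ℝ, f ≠ 0 ∧ ∃ a b : ℝ, a < b ∧ (∀ c ∈ C, f c ≤ a) ∧ ∀ d ∈ D, b ≤ f d

section ClusterHelpers

variable {α M : Type*} [TopologicalSpace M] {l : Filter α} {u v : α → M} {x y : M}

lemma exists_mapClusterPt_of_frequently {K : Set M} (hK : IsCompact K)
    (h : ∃ᶠ a in l, u a ∈ K) : ∃ x ∈ K, MapClusterPt x l u := by
  have hne : (Filter.map u l ⊓ 𝓟 K).NeBot := by
    rw [Filter.inf_principal_neBot_iff]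
    intro U hU
    have hU' : ∀ᶠ a in l, u a ∈ U := hU
    obtain ⟨a, ha1, ha2⟩ := (hU'.and_frequently h).exists
    exact ⟨u a, ha1, ha2⟩
  obtain ⟨z, hzK, hz⟩ := hK.exists_clusterPt (f := Filter.map u l ⊓ 𝓟 K) inf_le_right
  exact ⟨z, hzK, hz.mono inf_le_left⟩

lemma MapClusterPt.mem_of_eventually {S : Set M} (h : MapClusterPt x l u)
    (hS : IsClosed S) (hev : ∀ᶠ a in l, u a ∈ S) : x ∈ S := by
  rw [mapClusterPt_iff_frequently] at h
  rw [← hS.closure_eq, _root_.mem_closure_iff]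
  intro o ho hxo
  obtain ⟨a, h1, h2⟩ := ((h o (ho.mem_nhds hxo)).and_eventually hev).exists
  exact ⟨u a, h1, h2⟩

lemma MapClusterPt.add_tendsto [AddCommMonoid M] [ContinuousAdd M]
    (hu : MapClusterPt x l u) (hv : Filter.Tendsto v l (𝓝 y)) :
    MapClusterPt (x + y) l (fun a => u a + v a) := by
  rw [mapClusterPt_iff_frequently] at hu ⊢
  intro s hs
  have hadd : Filter.Tendsto (fun p : M × M => p.1 + p.2) (𝓝 x ×ˢ 𝓝 y) (𝓝 (x + y)) := by
    rw [← nhds_prod_eq]; exact continuous_add.tendsto (x, y)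
  obtain ⟨t, ht, r, hr, hsub⟩ := Filter.mem_prod_iff.1 (hadd hs)
  exact ((hu t ht).and_eventually (hv hr)).mono fun a ⟨h1, h2⟩ => hsub (Set.mk_mem_prod h1 h2)

end ClusterHelpers

section Bidual

open NormedSpace

variable (X : Type*) [NormedAddCommGroup X] [NormedSpace ℝ X]

/-- The canonical map from `X` to its double dual equipped with the weak-* topology. -/
noncomputable def jmap : X → WeakDual ℝ (StrongDual ℝ X) :=
  fun x => StrongDual.toWeakDual (NormedSpace.inclusionInDoubleDual ℝ X x)

variable {X}

lemma jmap_apply (x : X) (f : StrongDual ℝ X) : jmap X x f = f x := rfl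

lemma jmap_continuous : Continuous (jmap X) :=
  NormedSpace.Dual.toWeakDual_continuous.comp (NormedSpace.inclusionInDoubleDual ℝ X).continuous

lemma jmap_add (x y : X) : jmap X (x + y) = jmap X x + jmap X y :=
  DFunLike.ext _ _ fun f => f.map_add x y

lemma jmap_zero : jmap X 0 = 0 :=
  DFunLike.ext _ _ fun f => f.map_zero

lemma jmap_injective : Function.Injective (jmap X) := by
  intro x y hxy
  rw [SeparatingDual.eq_iff_forall_dual_eq (R := ℝ)]
  intro g
  exact DFunLike.congr_fun hxy g

lemma jmap_norm_le (x : X) (r : ℝ) (hx : ‖x‖ ≤ r) :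
    jmap X x ∈ WeakDual.toStrongDual ⁻¹' Metric.closedBall 0 r := by
  have : WeakDual.toStrongDual (jmap X x) = NormedSpace.inclusionInDoubleDual ℝ X x := rfl
  simp only [Set.mem_preimage, this, Metric.mem_closedBall, dist_zero_right]
  exact (dist_zero_right (NormedSpace.inclusionInDoubleDual ℝ X x : (X →L[ℝ] ℝ) →L[ℝ] ℝ)).le.trans ((NormedSpace.double_dual_bound ℝ X x).trans hx)

lemma jmap_surjective (hrefl : Function.Surjective (NormedSpace.inclusionInDoubleDual ℝ X)) :
    Function.Surjective (jmap X) := by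
  intro Φ
  obtain ⟨x, hx⟩ := hrefl (WeakDual.toStrongDual Φ)
  refine ⟨x, ?_⟩
  show StrongDual.toWeakDual (NormedSpace.inclusionInDoubleDual ℝ X x) = Φ
  rw [hx]
  exact StrongDual.toWeakDual.apply_symm_apply Φ

/-- The image under the canonical injection of a closed convex set in a reflexive space is
weak-* closed in the double dual. -/
lemma jmap_image_closed (hrefl : Function.Surjective (NormedSpace.inclusionInDoubleDual ℝ X))
    {C : Set X} (hCcl : IsClosed C) (hCcv : Convex ℝ C) : IsClosed (jmap X '' C) := by
  refine isClosed_of_closure_subset ?_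
  intro Φ hΦ
  obtain ⟨x, hx⟩ := jmap_surjective hrefl Φ
  refine ⟨x, ?_, hx⟩
  by_contra hxC
  obtain ⟨f, u, hfu, hux⟩ := geometric_hahn_banach_closed_point hCcv hCcl hxC
  have hV : IsOpen {Ψ : WeakDual ℝ (StrongDual ℝ X) | u < Ψ f} :=
    isOpen_lt continuous_const (WeakDual.eval_continuous f)
  have hΦV : Φ ∈ {Ψ : WeakDual ℝ (StrongDual ℝ X) | u < Ψ f} := by
    rw [← hx]; exact hux
  obtain ⟨Ψ, hΨ1, cc, hcc, rfl⟩ := _root_.mem_closure_iff.1 hΦ _ hV hΦV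
  exact absurd (hfu cc hcc) (not_lt.mpr hΨ1.le)

/-- A cluster-point criterion for membership in the recession cone. -/
lemma mem_recessionCone_of_cluster
    (hrefl : Function.Surjective (NormedSpace.inclusionInDoubleDual ℝ X))
    {S : Set X} (hScl : IsClosed S) (hScv : Convex ℝ S)
    {s : ℕ → X} (hs : ∀ n, s n ∈ S) {t : ℕ → ℝ} (ht0 : ∀ n, 0 ≤ t n)
    (ht1 : ∀ᶠ n in atTop, t n ≤ 1) (htlim : Tendsto t atTop (𝓝 0)) {v : X}
    (hclus : MapClusterPt (jmap X v) atTop (fun n => jmap X (t n • s n))) :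
    v ∈ recessionCone S := by
  intro c₀ hc₀
  have htend : Tendsto (fun n => jmap X ((1 - t n) • c₀)) atTop (𝓝 (jmap X c₀)) := by
    have h1 : Tendsto (fun n => (1 - t n) • c₀) atTop (𝓝 c₀) := by
      have := ((htlim.const_sub 1).smul_const c₀)
      simpa using this
    exact (jmap_continuous.tendsto c₀).comp h1
  have hclus2 := hclus.add_tendsto htend
  have heq : (fun n => jmap X (t n • s n) + jmap X ((1 - t n) • c₀)) =
      fun n => jmap X (t n • s n + (1 - t n) • c₀) := by
    funext n; rw [jmap_add]
  rw [heq, ← jmap_add] at hclus2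
  have hmem : v + c₀ ∈ S := by
    have himg : jmap X (v + c₀) ∈ jmap X '' S := by
      refine hclus2.mem_of_eventually (jmap_image_closed hrefl hScl hScv) ?_
      filter_upwards [ht1] with n hn
      exact ⟨t n • s n + (1 - t n) • c₀, hScv (hs n) hc₀ (ht0 n) (by linarith) (by ring), rfl⟩
    obtain ⟨w, hw, hweq⟩ := himg
    rwa [← jmap_injective hweq]
  rwa [add_comm] at hmem

end Bidual
lemma linBound {X : Type*} [NormedAddCommGroup X] [NormedSpace ℝ X] {C : Set X}
    (h : (interior (barrierCone C)).Nonempty) :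
    ∃ (f₀ : X →L[ℝ] ℝ) (ε M : ℝ), 0 < ε ∧ ∀ c ∈ C, f₀ c + ε * ‖c‖ ≤ M := by
  classical
  obtain ⟨g₁, hg₁⟩ := h
  rw [mem_interior_iff_mem_nhds, Metric.mem_nhds_iff] at hg₁
  obtain ⟨ρ, hρ, hball⟩ := hg₁
  -- the closed sets
  set T : ℕ → Set (X →L[ℝ] ℝ) := fun n => {f | ∀ c ∈ C, f c ≤ (n : ℝ)} with hT
  have hTclosed : ∀ n, IsClosed (T n) := by
    intro n
    have : T n = ⋂ c ∈ C, {f : X →L[ℝ] ℝ | f c ≤ (n : ℝ)} := by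
      ext f; simp [hT, Set.mem_iInter₂]
    rw [this]
    refine isClosed_biInter fun c _ => ?_
    exact isClosed_le ((ContinuousLinearMap.apply ℝ ℝ c).continuous) continuous_const
  -- Baire on the closed ball
  haveI : CompleteSpace (Metric.closedBall g₁ (ρ/2)) :=
    (Metric.isClosed_closedBall).completeSpace_coe
  haveI : Nonempty (Metric.closedBall g₁ (ρ/2)) :=
    ⟨⟨g₁, Metric.mem_closedBall_self (by linarith)⟩⟩
  have hUnion : (⋃ n, (Subtype.val ⁻¹' T n : Set (Metric.closedBall g₁ (ρ/2)))) = Set.univ := by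
    ext f
    simp only [Set.mem_iUnion, Set.mem_preimage, Set.mem_univ, iff_true]
    have hfb : (f : X →L[ℝ] ℝ) ∈ barrierCone C := by
      apply hball
      have := f.2
      rw [Metric.mem_closedBall] at this
      rw [Metric.mem_ball]
      linarith
    obtain ⟨b, hb⟩ := hfb
    exact ⟨⌈b⌉₊, fun c hc => (hb c hc).trans (Nat.le_ceil b)⟩
  haveI : BaireSpace (Metric.closedBall g₁ (ρ/2)) := BaireSpace.of_completelyPseudoMetrizable
  obtain ⟨n, x, hx⟩ := nonempty_interior_of_iUnion_of_closed
    (fun n => (hTclosed n).preimage continuous_subtype_val) hUnion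
  rw [mem_interior_iff_mem_nhds, Metric.mem_nhds_iff] at hx
  obtain ⟨δ₀, hδ₀, hsub⟩ := hx
  set δ := min δ₀ ρ with hδdef
  have hδ : 0 < δ := lt_min hδ₀ hρ
  have hδρ : δ ≤ ρ := min_le_right _ _
  have hkey : ∀ g : X →L[ℝ] ℝ, g ∈ Metric.closedBall g₁ (ρ/2) → ‖g - x.val‖ < δ → g ∈ T n := by
    intro g hg hlt
    have : (⟨g, hg⟩ : Metric.closedBall g₁ (ρ/2)) ∈ Metric.ball x δ₀ := by
      rw [Metric.mem_ball, Subtype.dist_eq, dist_eq_norm]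
      exact lt_of_lt_of_le hlt (min_le_left _ _)
    exact hsub this
  have hxball : ‖x.val - g₁‖ ≤ ρ/2 := by
    have := x.2; rw [Metric.mem_closedBall, dist_eq_norm] at this; exact this
  set θ : ℝ := δ / (2 * ρ) with hθdef
  have hθpos : 0 < θ := by positivity
  have hθhalf : θ ≤ 1/2 := by
    rw [hθdef, div_le_div_iff₀ (by positivity) (by norm_num)]
    nlinarith
  set x' : X →L[ℝ] ℝ := x.val + θ • (g₁ - x.val) with hx'def
  have claim : ∀ h : X →L[ℝ] ℝ, ‖h‖ < δ/8 → ∀ c ∈ C, (x' + h) c ≤ (n : ℝ) := by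
    intro h hh
    have hθρ : θ * ρ = δ / 2 := by
      rw [hθdef]; field_simp
    apply hkey
    · rw [Metric.mem_closedBall, dist_eq_norm]
      have heq : x' + h - g₁ = (1 - θ) • (x.val - g₁) + h := by
        rw [hx'def]; module
      rw [heq]
      calc ‖(1 - θ) • (x.val - g₁) + h‖ ≤ ‖(1 - θ) • (x.val - g₁)‖ + ‖h‖ := norm_add_le _ _
        _ ≤ (1 - θ) * (ρ/2) + δ/8 := by
            have h1 : ‖(1 - θ) • (x.val - g₁)‖ ≤ ‖(1:ℝ) - θ‖ * ‖x.val - g₁‖ := ContinuousLinearMap.opNorm_smul_le _ _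
            rw [Real.norm_eq_abs, abs_of_nonneg (by linarith)] at h1
            nlinarith
        _ ≤ ρ/2 := by nlinarith
    · have heq : x' + h - x.val = θ • (g₁ - x.val) + h := by rw [hx'def]; abel
      rw [heq]
      have hθρ2 : θ * (ρ/2) = δ/4 := by rw [hθdef]; field_simp; ring
      calc ‖θ • (g₁ - x.val) + h‖ ≤ ‖θ • (g₁ - x.val)‖ + ‖h‖ := norm_add_le _ _
        _ ≤ θ * (ρ/2) + δ/8 := by
            have h1 : ‖θ • (g₁ - x.val)‖ ≤ ‖θ‖ * ‖g₁ - x.val‖ := ContinuousLinearMap.opNorm_smul_le _ _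
            rw [Real.norm_eq_abs, abs_of_nonneg hθpos.le, norm_sub_rev] at h1
            nlinarith
        _ < δ := by rw [hθρ2]; linarith
  refine ⟨x', δ/16, (n : ℝ), by positivity, fun c hc => ?_⟩
  rcases eq_or_ne c 0 with rfl | hc0
  · simpa using claim 0 (by simp; positivity) 0 hc
  · obtain ⟨φ, hφ1, hφc⟩ := exists_dual_vector ℝ c (norm_ne_zero_iff.mpr hc0)
    have hnh : ‖(δ/16) • φ‖ < δ/8 := by
      have h1 : ‖(δ/16) • φ‖ ≤ ‖(δ/16 : ℝ)‖ * ‖φ‖ := ContinuousLinearMap.opNorm_smul_le _ _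
      rw [Real.norm_eq_abs, abs_of_nonneg (by positivity), hφ1] at h1
      linarith
    have := claim ((δ/16) • φ) hnh c hc
    simp only [ContinuousLinearMap.add_apply, ContinuousLinearMap.smul_apply] at this
    rw [hφc] at this
    simpa [smul_eq_mul] using this

section KeyLemma

open NormedSpace

variable {X : Type*} [NormedAddCommGroup X] [NormedSpace ℝ X]

lemma key_dist (hrefl : Function.Surjective (NormedSpace.inclusionInDoubleDual ℝ X))
    {C D : Set X} (hCcl : IsClosed C) (hDcl : IsClosed D)
    (hCcv : Convex ℝ C) (hDcv : Convex ℝ D) (hdisj : Disjoint C D)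
    (hrec : recessionCone C ∩ recessionCone D = {0})
    (hCint : (interior (barrierCone C)).Nonempty) :
    ∃ δ > (0 : ℝ), ∀ c ∈ C, ∀ d ∈ D, δ ≤ ‖c - d‖ := by
  by_contra hcon
  push_neg at hcon
  have hseq : ∀ n : ℕ, ∃ p : X × X, p.1 ∈ C ∧ p.2 ∈ D ∧ ‖p.1 - p.2‖ < 1 / (n + 1) := by
    intro n
    obtain ⟨c, hc, d, hd, h⟩ := hcon (1 / (n + 1)) (by positivity)
    exact ⟨(c, d), hc, hd, h⟩
  choose p hpC hpD hplt using hseq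
  set c : ℕ → X := fun n => (p n).1 with hc
  set d : ℕ → X := fun n => (p n).2 with hd
  have hcd0 : Tendsto (fun n => d n - c n) atTop (𝓝 0) := by
    refine squeeze_zero_norm (fun n => ?_) tendsto_one_div_add_atTop_nhds_zero_nat
    rw [norm_sub_rev]
    exact (hplt n).le
  by_cases hbd : ∃ R : ℝ, ∃ᶠ n in atTop, ‖c n‖ ≤ R
  · -- bounded case: a common weak cluster point of `c` and `d` lies in `C ∩ D`
    obtain ⟨R, hR⟩ := hbd
    have hfreq : ∃ᶠ n in atTop, jmap X (c n) ∈
        WeakDual.toStrongDual ⁻¹' Metric.closedBall 0 (max R 0) := by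
      refine hR.mono fun n hn => ?_
      exact jmap_norm_le _ _ (hn.trans (le_max_left _ _))
    obtain ⟨Φ, _, hclus⟩ := exists_mapClusterPt_of_frequently
      (WeakDual.isCompact_closedBall (𝕜 := ℝ) (0 : StrongDual ℝ (StrongDual ℝ X)) (max R 0)) hfreq
    obtain ⟨v, hv⟩ := jmap_surjective hrefl Φ
    rw [← hv] at hclus
    have hvC : v ∈ C := by
      have : jmap X v ∈ jmap X '' C :=hclus.mem_of_eventually
        (jmap_image_closed hrefl hCcl hCcv)
        (Filter.Eventually.of_forall fun n => ⟨c n, hpC n, rfl⟩)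
      obtain ⟨w, hw, hweq⟩ := this
      rwa [← jmap_injective hweq]
    have hvD : v ∈ D := by
      have htend : Tendsto (fun n => jmap X (d n - c n)) atTop (𝓝 (jmap X 0)) :=
        (jmap_continuous.tendsto 0).comp hcd0
      rw [jmap_zero] at htend
      have hclus2 := hclus.add_tendsto htend
      have heq : (fun n => jmap X (c n) + jmap X (d n - c n)) = fun n => jmap X (d n) := by
        funext n; rw [← jmap_add, add_sub_cancel]
      rw [heq, add_zero] at hclus2
      have : jmap X v ∈ jmap X '' D := hclus2.mem_of_eventually
        (jmap_image_closed hrefl hDcl hDcv)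
        (Filter.Eventually.of_forall fun n => ⟨d n, hpD n, rfl⟩)
      obtain ⟨w, hw, hweq⟩ := this
      rwa [← jmap_injective hweq]
    exact Set.disjoint_left.mp hdisj hvC hvD
  · -- unbounded case: produce a nonzero common recession direction
    have htends : Tendsto (fun n => ‖c n‖) atTop atTop := by
      rw [Filter.tendsto_atTop]
      intro R
      have := not_exists.mp hbd R
      rw [Filter.not_frequently] at this
      filter_upwards [this] with n hn
      exact (not_le.mp hn).le
    obtain ⟨f₀, ε, M, hε, hC⟩ := linBound hCint
    set t : ℕ → ℝ := fun n => (‖c n‖)⁻¹ with ht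
    have ht0 : ∀ n, 0 ≤ t n := fun n => inv_nonneg.mpr (norm_nonneg _)
    have hev1 : ∀ᶠ n in atTop, 1 ≤ ‖c n‖ := htends.eventually_ge_atTop 1
    have ht1 : ∀ᶠ n in atTop, t n ≤ 1 := by
      filter_upwards [hev1] with n hn
      exact inv_le_one_of_one_le₀ hn
    have htlim : Tendsto t atTop (𝓝 0) := htends.inv_tendsto_atTop
    have hfreq : ∃ᶠ n in atTop, jmap X (t n • c n) ∈
        WeakDual.toStrongDual ⁻¹' Metric.closedBall 0 1 := by
      refine (hev1.mono fun n hn => ?_).frequently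
      refine jmap_norm_le _ _ ?_
      have hcn : ‖c n‖ ≠ 0 := by positivity
      have heq : ‖t n • c n‖ = 1 := by
        rw [norm_smul, Real.norm_eq_abs, abs_of_nonneg (ht0 n)]
        exact inv_mul_cancel₀ hcn
      exact le_of_eq heq
    obtain ⟨Φ, _, hclus⟩ := exists_mapClusterPt_of_frequently
      (WeakDual.isCompact_closedBall (𝕜 := ℝ) (0 : StrongDual ℝ (StrongDual ℝ X)) 1) hfreq
    obtain ⟨v, hv⟩ := jmap_surjective hrefl Φ
    rw [← hv] at hclus
    -- f₀ v ≤ -ε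
    have hf₀v : f₀ v ≤ -ε := by
      have hclusF : MapClusterPt (jmap X v f₀) atTop
          (fun n => jmap X (t n • c n) f₀) :=
        MapClusterPt.continuousAt_comp (WeakDual.eval_continuous f₀).continuousAt hclus
      rw [show (jmap X v) f₀ = f₀ v from rfl] at hclusF
      have : ∀ η > (0 : ℝ), f₀ v ≤ -ε + η := by
        intro η hη
        have hevsmall : ∀ᶠ n in atTop, t n * M < η :=
          (htlim.mul_const M).eventually_lt_const (by simpa using hη)
        refine hclusF.mem_of_eventually isClosed_Iic ?_
        filter_upwards [hev1, hevsmall] with n hn hns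
        have hcn : (0:ℝ) < ‖c n‖ := lt_of_lt_of_le one_pos hn
        have h1 : jmap X (t n • c n) f₀ = t n * f₀ (c n) := by
          rw [jmap_apply, map_smul, smul_eq_mul]
        have h2 : f₀ (c n) ≤ M - ε * ‖c n‖ := by
          have := hC (c n) (hpC n); linarith
        have h3 : t n * f₀ (c n) ≤ t n * (M - ε * ‖c n‖) :=
          mul_le_mul_of_nonneg_left h2 (ht0 n)
        have h4 : t n * ‖c n‖ = 1 := inv_mul_cancel₀ hcn.ne'
        have h5 : t n * (M - ε * ‖c n‖) = t n * M - ε * (t n * ‖c n‖) := by ring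
        rw [Set.mem_Iic, h1]
        rw [h5, h4] at h3
        linarith
      by_contra hlt
      push_neg at hlt
      obtain ⟨η, hη, hη2⟩ := exists_between hlt
      exact absurd (this (η - (-ε)) (by linarith)) (by linarith)
    have hvne : v ≠ 0 := by
      intro h0
      rw [h0, map_zero] at hf₀v
      linarith
    -- v is a common recession direction
    have hvC : v ∈ recessionCone C :=
      mem_recessionCone_of_cluster hrefl hCcl hCcv hpC ht0 ht1 htlim hclus
    have hvD : v ∈ recessionCone D := by
      refine mem_recessionCone_of_cluster hrefl hDcl hDcv hpD ht0 ht1 htlim ?_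
      have htend0 : Tendsto (fun n => jmap X (t n • (d n - c n))) atTop (𝓝 (jmap X 0)) := by
        refine (jmap_continuous.tendsto 0).comp ?_
        refine squeeze_zero_norm' ?_ (by simpa using hcd0.norm)
        filter_upwards [ht1] with n hn
        rw [norm_smul, Real.norm_eq_abs, abs_of_nonneg (ht0 n)]
        exact mul_le_of_le_one_left (norm_nonneg _) hn
      rw [jmap_zero] at htend0
      have hclus2 := hclus.add_tendsto htend0
      have heq : (fun n => jmap X (t n • c n) + jmap X (t n • (d n - c n))) =
          fun n => jmap X (t n • d n) := by
        funext n
        rw [← jmap_add, ← smul_add, add_sub_cancel]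
      rw [heq, add_zero] at hclus2
      exact hclus2
    have : v ∈ ({0} : Set X) := hrec ▸ Set.mem_inter hvC hvD
    exact hvne (Set.eq_of_mem_singleton this)

end KeyLemma

/-- In a real reflexive Banach space, disjoint nonempty closed convex sets `C`, `D`
with `rec(C) ∩ rec(D) = {0}` such that `Int barc(C)` or `Int barc(D)` is nonempty are strongly
separated; equivalently, `dist(C, D) > 0`. -/
theorem statement3 {X : Type*} [NormedAddCommGroup X] [NormedSpace ℝ X] [CompleteSpace X]
    (hrefl : Function.Surjective (NormedSpace.inclusionInDoubleDual ℝ X))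
    (C D : Set X) (hCne : C.Nonempty) (hDne : D.Nonempty)
    (hCcl : IsClosed C) (hDcl : IsClosed D) (hCcv : Convex ℝ C) (hDcv : Convex ℝ D)
    (hdisj : Disjoint C D)
    (hrec : recessionCone C ∩ recessionCone D = {0})
    (hint : (interior (barrierCone C)).Nonempty ∨ (interior (barrierCone D)).Nonempty) :
    StronglySeparated C D ∧ ∃ δ > (0 : ℝ), ∀ c ∈ C, ∀ d ∈ D, δ ≤ ‖c - d‖ := by
  have hdal : ∃ δ > (0 : ℝ), ∀ c ∈ C, ∀ d ∈ D, δ ≤ ‖c - d‖ := by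
    rcases hint with hCi | hDi
    · exact key_dist hrefl hCcl hDcl hCcv hDcv hdisj hrec hCi
    · obtain ⟨δ, hδ, h⟩ := key_dist hrefl hDcl hCcl hDcv hCcv hdisj.symm
        (by rw [Set.inter_comm]; exact hrec) hDi
      exact ⟨δ, hδ, fun c hc d hd => by rw [norm_sub_rev]; exact h d hd c hc⟩
  obtain ⟨δ, hδpos, hδ⟩ := hdal
  refine ⟨?_, δ, hδpos, hδ⟩
  -- separate `C + ball 0 δ` (open convex) from `D`
  have hopen : IsOpen (C + Metric.ball (0 : X) δ) := IsOpen.add_left Metric.isOpen_ball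
  have hconv : Convex ℝ (C + Metric.ball (0 : X) δ) := hCcv.add (convex_ball 0 δ)
  have hdisj2 : Disjoint (C + Metric.ball (0 : X) δ) D := by
    rw [Set.disjoint_left]
    rintro x ⟨cc, hcc, w, hw, rfl⟩ hxD
    have h1 : δ ≤ ‖cc - (cc + w)‖ := hδ cc hcc _ hxD
    rw [show cc - (cc + w) = -w by abel, norm_neg] at h1
    rw [mem_ball_zero_iff] at hw
    linarith
  obtain ⟨f, u, hfs, hfD⟩ := geometric_hahn_banach_open hconv hopen hDcv hdisj2
  obtain ⟨c₀, hc₀⟩ := hCne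
  obtain ⟨d₀, hd₀⟩ := hDne
  have hc₀s : c₀ ∈ C + Metric.ball (0 : X) δ := by
    have := Set.add_mem_add hc₀ (Metric.mem_ball_self (x := (0:X)) hδpos)
    rwa [add_zero] at this
  have hfne : f ≠ 0 := by
    intro h0
    have h1 := hfs c₀ hc₀s
    have h2 := hfD d₀ hd₀
    rw [h0] at h1 h2
    simp at h1 h2
    linarith
  have hnf : 0 < ‖f‖ := norm_pos_iff.mpr hfne
  obtain ⟨z, hz1, hz2⟩ := f.exists_lt_apply_of_lt_opNorm (half_lt_self hnf)
  set w₀ : X := if 0 ≤ f z then z else -z with hw₀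
  have hw₀n : ‖w₀‖ < 1 := by
    rw [hw₀]; split <;> simpa
  have hfw₀ : ‖f‖ / 2 < f w₀ := by
    rw [hw₀]
    rcases le_or_gt 0 (f z) with h | h
    · rw [if_pos h]
      rwa [Real.norm_eq_abs, abs_of_nonneg h] at hz2
    · rw [if_neg (not_le.mpr h), map_neg]
      rwa [Real.norm_eq_abs, abs_of_neg h] at hz2
  refine ⟨f, hfne, u - δ * (‖f‖ / 2), u, by nlinarith, ?_, fun d hd => hfD d hd⟩
  intro cc hcc
  have hmem : cc + δ • w₀ ∈ C + Metric.ball (0 : X) δ := by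
    refine Set.add_mem_add hcc ?_
    rw [mem_ball_zero_iff, norm_smul, Real.norm_eq_abs, abs_of_pos hδpos]
    nlinarith [norm_nonneg w₀]
  have h1 : f (cc + δ • w₀) < u := hfs _ hmem
  rw [map_add, map_smul, smul_eq_mul] at h1
  nlinarith
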